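/- Let n ≥ 1, let σ be an invertible skew-symmetric 2n×2n complex matrix, and α, β̃ ∈ ℂ^{2n}. Let Ψ and Φ be 2n×2n matrices over ℂ((z)) of order ≥ −1 with Ψ·Φ = Φ·Ψ = 1, Ψ_{−1} = β̃·αᵀ·σ, Φ_{−1} = α·β̃ᵀ·σ, and Ψᵀ = −σ·Φ·σ⁻¹ (transposition applied coefficientwise). Assume Ψ₀·α = 0 and αᵀ·σ·Φ₀ = 0. Let h be a diagonal 2n×2n matrix over ℂ((z)) of order ≥ 0 with hᵀ = −σ·h·σ⁻¹. Then L := Φ·h·Ψ has order ≥ −2, every coefficient X of L satisfies Xᵀσ + σX = 0, and there exist ν, κ ∈ ℂ and β ∈ ℂ^{2n} such that L_{−2} = ν·α·αᵀ·σ, L_{−1} = (α·βᵀ + β·αᵀ)·σ, βᵀσα = 0, L_0·α = κ·α, and αᵀσL_1α = 0. (This is the symplectic case, ε = 1, of the Lemma that Ψ⁻¹hΨ lies in the Lax operator algebra, localized at a Tyurin point γ.) -/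

import Mathlib

open Matrix

/-- The matrix of `z^k`-coefficients of a matrix of formal Laurent series. -/
noncomputable def coeffM {n : ℕ} (A : Matrix (Fin n) (Fin n) (LaurentSeries ℂ)) (k : ℤ) :
    Matrix (Fin n) (Fin n) ℂ :=
  fun i j => (A i j).coeff k

/-- `A` has order `≥ m`: all coefficients below `m` vanish. -/
def ordGE {n : ℕ} (A : Matrix (Fin n) (Fin n) (LaurentSeries ℂ)) (m : ℤ) : Prop :=
  ∀ k : ℤ, k < m → coeffM A k = 0

section Helpers

lemma ls_mul_coeff (f g : LaurentSeries ℂ) (a b k : ℤ)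
    (hf : ∀ i < a, f.coeff i = 0) (hg : ∀ j < b, g.coeff j = 0) :
    (f * g).coeff k = ∑ i ∈ Finset.Icc a (k - b), f.coeff i * g.coeff (k - i) := by
  rw [HahnSeries.coeff_mul]
  have himg : (∑ p ∈ (Finset.Icc a (k - b)).image (fun i => (i, k - i)),
      f.coeff p.1 * g.coeff p.2) = ∑ i ∈ Finset.Icc a (k - b), f.coeff i * g.coeff (k - i) := by
    apply Finset.sum_image
    intro x _ y _ hxy
    exact (Prod.ext_iff.mp hxy).1
  rw [← himg]
  apply Finset.sum_subset
  · intro p hp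
    rw [Finset.mem_addAntidiagonal] at hp
    obtain ⟨h1, h2, h3⟩ := hp
    rw [HahnSeries.mem_support] at h1 h2
    simp only [Finset.mem_image, Finset.mem_Icc]
    refine ⟨p.1, ⟨?_, ?_⟩, ?_⟩
    · by_contra hc; exact h1 (hf _ (lt_of_not_ge hc))
    · have : b ≤ p.2 := by by_contra hc; exact h2 (hg _ (lt_of_not_ge hc))
      omega
    · have : p.2 = k - p.1 := by omega
      rw [← this]
  · intro p hp hnp
    simp only [Finset.mem_image, Finset.mem_Icc] at hp
    obtain ⟨i, _, rfl⟩ := hp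
    rw [Finset.mem_addAntidiagonal] at hnp
    simp only [HahnSeries.mem_support, not_and] at hnp
    by_cases h1 : f.coeff i = 0
    · simp [h1]
    · by_cases h2 : g.coeff (k - i) = 0
      · simp [h2]
      · exact absurd (by omega) (hnp h1 h2)

variable {N : ℕ}

lemma coeffM_mul (A B : Matrix (Fin N) (Fin N) (LaurentSeries ℂ)) (a b : ℤ)
    (hA : ordGE A a) (hB : ordGE B b) (k : ℤ) :
    coeffM (A * B) k = ∑ i ∈ Finset.Icc a (k - b), coeffM A i * coeffM B (k - i) := by
  ext p q
  have : coeffM (A * B) k p q = ((A * B) p q).coeff k := rfl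
  rw [this, Matrix.mul_apply,
    show (∑ j : Fin N, A p j * B j q).coeff k
      = ∑ j : Fin N, (A p j * B j q).coeff k from
      map_sum (HahnSeries.coeff.addMonoidHom k) _ _]
  have step : ∀ r, (A p r * B r q).coeff k
      = ∑ i ∈ Finset.Icc a (k - b), (A p r).coeff i * (B r q).coeff (k - i) := by
    intro r
    exact ls_mul_coeff _ _ a b k
      (fun i hi => congrFun (congrFun (hA i hi) p) r)
      (fun j hj => congrFun (congrFun (hB j hj) r) q)
  rw [Finset.sum_congr rfl (fun r _ => step r), Finset.sum_comm]
  simp [Matrix.sum_apply, Matrix.mul_apply, coeffM]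

noncomputable def cmap (A : Matrix (Fin N) (Fin N) ℂ) :
    Matrix (Fin N) (Fin N) (LaurentSeries ℂ) :=
  A.map (HahnSeries.C : ℂ →+* LaurentSeries ℂ)

lemma coeffM_ext {A B : Matrix (Fin N) (Fin N) (LaurentSeries ℂ)}
    (hc : ∀ k, coeffM A k = coeffM B k) : A = B := by
  ext i j k
  exact congrFun (congrFun (hc k) i) j

lemma coeffM_neg (A : Matrix (Fin N) (Fin N) (LaurentSeries ℂ)) (k : ℤ) :
    coeffM (-A) k = -coeffM A k := rfl

lemma coeffM_transpose (A : Matrix (Fin N) (Fin N) (LaurentSeries ℂ)) (k : ℤ) :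
    coeffM Aᵀ k = (coeffM A k)ᵀ := rfl

lemma coeffM_cmap_mul (S : Matrix (Fin N) (Fin N) ℂ)
    (A : Matrix (Fin N) (Fin N) (LaurentSeries ℂ)) (k : ℤ) :
    coeffM (cmap S * A) k = S * coeffM A k := by
  ext p q
  have : coeffM (cmap S * A) k p q = ((cmap S * A) p q).coeff k := rfl
  rw [this, Matrix.mul_apply,
    show (∑ j, cmap S p j * A j q).coeff k = ∑ j, (cmap S p j * A j q).coeff k from
      map_sum (HahnSeries.coeff.addMonoidHom k) _ _]
  simp only [cmap, Matrix.map_apply, HahnSeries.C_mul_eq_smul, HahnSeries.coeff_smul]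
  rfl

lemma coeffM_mul_cmap (A : Matrix (Fin N) (Fin N) (LaurentSeries ℂ))
    (S : Matrix (Fin N) (Fin N) ℂ) (k : ℤ) :
    coeffM (A * cmap S) k = coeffM A k * S := by
  ext p q
  have : coeffM (A * cmap S) k p q = ((A * cmap S) p q).coeff k := rfl
  rw [this, Matrix.mul_apply,
    show (∑ j, A p j * cmap S j q).coeff k = ∑ j, (A p j * cmap S j q).coeff k from
      map_sum (HahnSeries.coeff.addMonoidHom k) _ _]
  simp only [cmap, Matrix.map_apply, HahnSeries.C_apply, HahnSeries.coeff_mul_single_zero]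
  simp [Matrix.mul_apply, coeffM]

lemma cmap_mul (A B : Matrix (Fin N) (Fin N) ℂ) : cmap (A * B) = cmap A * cmap B :=
  Matrix.map_mul

lemma cmap_one : cmap (1 : Matrix (Fin N) (Fin N) ℂ) = 1 :=
  Matrix.map_one _ (map_zero _) (map_one _)

lemma cmap_neg (A : Matrix (Fin N) (Fin N) ℂ) : cmap (-A) = -cmap A := by
  ext i j k
  simp only [cmap, Matrix.map_apply, Matrix.neg_apply, map_neg, HahnSeries.coeff_neg]

lemma cmap_transpose (A : Matrix (Fin N) (Fin N) ℂ) : (cmap A)ᵀ = cmap Aᵀ :=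
  (Matrix.transpose_map).symm

lemma vMV_mulVec (u v x : Fin N → ℂ) : vecMulVec u v *ᵥ x = (v ⬝ᵥ x) • u := by
  ext i; simp [vecMulVec_apply, mulVec, dotProduct, Finset.mul_sum, mul_comm, mul_left_comm]

lemma vecMul_vMV (x u v : Fin N → ℂ) : x ᵥ* vecMulVec u v = (x ⬝ᵥ u) • v := by
  ext j; simp [vecMulVec_apply, vecMul, dotProduct, Finset.sum_mul, Finset.mul_sum, mul_comm,
    mul_assoc, mul_left_comm]

lemma mul_vMV (M : Matrix (Fin N) (Fin N) ℂ) (u v : Fin N → ℂ) :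
    M * vecMulVec u v = vecMulVec (M *ᵥ u) v := by
  ext i j; simp [Matrix.mul_apply, vecMulVec_apply, mulVec, dotProduct, Finset.sum_mul,
    Finset.mul_sum, mul_comm, mul_assoc, mul_left_comm]

lemma vMV_mul (u v : Fin N → ℂ) (M : Matrix (Fin N) (Fin N) ℂ) :
    vecMulVec u v * M = vecMulVec u (v ᵥ* M) := by
  ext i j; simp [Matrix.mul_apply, vecMulVec_apply, vecMul, dotProduct, Finset.mul_sum, mul_assoc]

lemma vMV_mul_vMV (u v w x : Fin N → ℂ) :
    vecMulVec u v * vecMulVec w x = (v ⬝ᵥ w) • vecMulVec u x := by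
  rw [mul_vMV, vMV_mulVec]
  ext i j; simp [vecMulVec_apply, Matrix.smul_apply, mul_comm, mul_assoc, mul_left_comm]

lemma sandwich (u v w x : Fin N → ℂ) (A : Matrix (Fin N) (Fin N) ℂ) :
    vecMulVec u v * (A * vecMulVec w x) = ((v ᵥ* A) ⬝ᵥ w) • vecMulVec u x := by
  rw [← Matrix.mul_assoc, vMV_mul, vMV_mul_vMV]

lemma vMV_add_left (u v w : Fin N → ℂ) :
    vecMulVec (u + v) w = vecMulVec u w + vecMulVec v w := by
  ext i j; simp [vecMulVec_apply, add_mul]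

lemma vMV_add_right (u v w : Fin N → ℂ) :
    vecMulVec u (v + w) = vecMulVec u v + vecMulVec u w := by
  ext i j; simp [vecMulVec_apply, mul_add]

lemma vMV_smul_right (c : ℂ) (u v : Fin N → ℂ) :
    vecMulVec u (c • v) = c • vecMulVec u v := by
  ext i j; simp [vecMulVec_apply, Finset.mul_sum, Finset.sum_mul, mul_comm, mul_assoc,
    mul_left_comm]

lemma vMV_smul_left (c : ℂ) (u v : Fin N → ℂ) :
    vecMulVec (c • u) v = c • vecMulVec u v := by
  ext i j; simp [vecMulVec_apply, mul_assoc]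

end Helpers

/-- The symplectic case (`ε = 1`) of the Lemma: `Ψ⁻¹hΨ` lies in the Lax operator algebra,
localized at a Tyurin point. -/
theorem conjugated_diagonal_is_lax_sp (n : ℕ) (hn : 1 ≤ n)
    (σ : Matrix (Fin (2 * n)) (Fin (2 * n)) ℂ) (hσdet : IsUnit σ.det) (hσskew : σᵀ = -σ)
    (α βt : Fin (2 * n) → ℂ)
    (Ψ Φ : Matrix (Fin (2 * n)) (Fin (2 * n)) (LaurentSeries ℂ))
    (hΨord : ordGE Ψ (-1)) (hΦord : ordGE Φ (-1))
    (hΨΦ : Ψ * Φ = 1) (hΦΨ : Φ * Ψ = 1)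
    (hΨm1 : coeffM Ψ (-1) = vecMulVec βt α * σ)
    (hΦm1 : coeffM Φ (-1) = vecMulVec α βt * σ)
    (hΨsp : ∀ k : ℤ, (coeffM Ψ k)ᵀ = -(σ * coeffM Φ k * σ⁻¹))
    (hΨ₀α : (coeffM Ψ 0).mulVec α = 0)
    (hΦ₀α : vecMul α (σ * coeffM Φ 0) = 0)
    (h : Matrix (Fin (2 * n)) (Fin (2 * n)) (LaurentSeries ℂ))
    (hhord : ordGE h 0) (hhdiag : ∀ k : ℤ, (coeffM h k).IsDiag)
    (hhcart : ∀ k : ℤ, (coeffM h k)ᵀ = -(σ * coeffM h k * σ⁻¹)) :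
    ordGE (Φ * h * Ψ) (-2) ∧
    (∀ k : ℤ, (coeffM (Φ * h * Ψ) k)ᵀ * σ + σ * coeffM (Φ * h * Ψ) k = 0) ∧
    ∃ (ν κ : ℂ) (β : Fin (2 * n) → ℂ),
      coeffM (Φ * h * Ψ) (-2) = ν • (vecMulVec α α * σ) ∧
      coeffM (Φ * h * Ψ) (-1) = (vecMulVec α β + vecMulVec β α) * σ ∧
      β ⬝ᵥ σ.mulVec α = 0 ∧
      (coeffM (Φ * h * Ψ) 0).mulVec α = κ • α ∧
      α ⬝ᵥ (σ * coeffM (Φ * h * Ψ) 1).mulVec α = 0 := by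
  -- basic facts about σ
  have hσ1 : σ * σ⁻¹ = 1 := Matrix.mul_nonsing_inv σ hσdet
  have hσ1' : σ⁻¹ * σ = 1 := Matrix.nonsing_inv_mul σ hσdet
  have hinvσ : ∀ X : Matrix (Fin (2 * n)) (Fin (2 * n)) ℂ, σ⁻¹ * (σ * X) = X :=
    fun X => by rw [← Matrix.mul_assoc, hσ1', Matrix.one_mul]
  have hσinvT : (σ⁻¹)ᵀ = -σ⁻¹ := by
    rw [Matrix.transpose_nonsing_inv, hσskew]
    apply Matrix.inv_eq_right_inv
    rw [neg_mul, mul_neg, neg_neg, hσ1]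
  have hσα : α ⬝ᵥ σ *ᵥ α = 0 := by
    have h2 : α ᵥ* σ = -(σ *ᵥ α) := by
      rw [← Matrix.mulVec_transpose, hσskew, Matrix.neg_mulVec]
    have h1 : α ⬝ᵥ σ *ᵥ α = -(α ⬝ᵥ σ *ᵥ α) := by
      calc α ⬝ᵥ σ *ᵥ α = (α ᵥ* σ) ⬝ᵥ α := Matrix.dotProduct_mulVec α σ α
        _ = -((σ *ᵥ α) ⬝ᵥ α) := by rw [h2, neg_dotProduct]
        _ = -(α ⬝ᵥ σ *ᵥ α) := by rw [dotProduct_comm]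
    exact add_self_eq_zero.mp (by linear_combination h1)
  -- coefficientwise symplectic relation for Φ
  have hΦsp : ∀ k : ℤ, (coeffM Φ k)ᵀ = -(σ * coeffM Ψ k * σ⁻¹) := by
    intro k
    have h2 : σ⁻¹ * (coeffM Ψ k)ᵀ * σ = -coeffM Φ k := by
      rw [hΨsp k]
      simp only [Matrix.mul_neg, Matrix.neg_mul, Matrix.mul_assoc]
      rw [hinvσ, hσ1', Matrix.mul_one]
    have h3 : coeffM Φ k = -(σ⁻¹ * (coeffM Ψ k)ᵀ * σ) := by
      rw [h2, neg_neg]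
    calc (coeffM Φ k)ᵀ = (-(σ⁻¹ * (coeffM Ψ k)ᵀ * σ))ᵀ := by rw [← h3]
      _ = -(σᵀ * ((coeffM Ψ k) * (σ⁻¹)ᵀ)) := by
          rw [Matrix.transpose_neg, Matrix.transpose_mul, Matrix.transpose_mul,
            Matrix.transpose_transpose]
      _ = -(σ * coeffM Ψ k * σ⁻¹) := by
          rw [hσskew, hσinvT]
          simp only [Matrix.neg_mul, Matrix.mul_neg, neg_neg, Matrix.mul_assoc]
  -- series-level symmetry
  set τ : Matrix (Fin (2 * n)) (Fin (2 * n)) (LaurentSeries ℂ) := cmap σ with hτ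
  set τ' : Matrix (Fin (2 * n)) (Fin (2 * n)) (LaurentSeries ℂ) := cmap σ⁻¹ with hτ'
  have hτ'τ : τ' * τ = 1 := by rw [hτ, hτ', ← cmap_mul, hσ1', cmap_one]
  have hRcancel : ∀ X : Matrix (Fin (2 * n)) (Fin (2 * n)) (LaurentSeries ℂ),
      τ' * (τ * X) = X := fun X => by rw [← Matrix.mul_assoc, hτ'τ, Matrix.one_mul]
  have hΨT : Ψᵀ = -(τ * Φ * τ') := by
    apply coeffM_ext
    intro k
    rw [coeffM_transpose, coeffM_neg, coeffM_mul_cmap, coeffM_cmap_mul, hΨsp k]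
  have hhT : hᵀ = -(τ * h * τ') := by
    apply coeffM_ext
    intro k
    rw [coeffM_transpose, coeffM_neg, coeffM_mul_cmap, coeffM_cmap_mul, hhcart k]
  have hΦT : Φᵀ = -(τ * Ψ * τ') := by
    apply coeffM_ext
    intro k
    rw [coeffM_transpose, coeffM_neg, coeffM_mul_cmap, coeffM_cmap_mul, hΦsp k]
  have hLT : (Φ * h * Ψ)ᵀ = -(τ * (Φ * h * Ψ) * τ') := by
    rw [Matrix.transpose_mul, Matrix.transpose_mul, hΨT, hhT, hΦT]
    simp only [Matrix.neg_mul, Matrix.mul_neg, neg_neg, Matrix.mul_assoc]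
    rw [hRcancel, hRcancel]
  have hLsym : ∀ k : ℤ, (coeffM (Φ * h * Ψ) k)ᵀ
      = -(σ * coeffM (Φ * h * Ψ) k * σ⁻¹) := by
    intro k
    rw [← coeffM_transpose, hLT, coeffM_neg, hτ', coeffM_mul_cmap, hτ, coeffM_cmap_mul]
  -- orders
  have hMord : ordGE (Φ * h) (-1) := by
    intro k hk
    rw [coeffM_mul Φ h (-1) 0 hΦord hhord k, Finset.Icc_eq_empty (by omega), Finset.sum_empty]
  have hLord : ordGE (Φ * h * Ψ) (-2) := by
    intro k hk
    rw [coeffM_mul (Φ * h) Ψ (-1) (-1) hMord hΨord k, Finset.Icc_eq_empty (by omega),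
      Finset.sum_empty]
  refine ⟨hLord, ?_, ?_⟩
  · intro k
    rw [hLsym k, Matrix.neg_mul, Matrix.mul_assoc (σ * coeffM (Φ * h * Ψ) k), hσ1',
      Matrix.mul_one, neg_add_cancel]
  -- coefficient formulas
  have hM := fun k => coeffM_mul Φ h (-1) 0 hΦord hhord k
  have hL := fun k => coeffM_mul (Φ * h) Ψ (-1) (-1) hMord hΨord k
  have hM_m1 : coeffM (Φ * h) (-1) = coeffM Φ (-1) * coeffM h 0 := by
    rw [hM (-1), show ((-1 : ℤ) - 0) = -1 by norm_num,
      show Finset.Icc (-1 : ℤ) (-1) = {-1} from by decide, Finset.sum_singleton]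
    norm_num
  have hM_0 : coeffM (Φ * h) 0 = coeffM Φ (-1) * coeffM h 1 + coeffM Φ 0 * coeffM h 0 := by
    rw [hM 0, show ((0 : ℤ) - 0) = 0 by norm_num,
      show Finset.Icc (-1 : ℤ) 0 = {-1, 0} from by decide]
    rw [Finset.sum_insert (by decide), Finset.sum_singleton]
    norm_num
  have hL_m2 : coeffM (Φ * h * Ψ) (-2) = coeffM (Φ * h) (-1) * coeffM Ψ (-1) := by
    rw [hL (-2), show ((-2 : ℤ) - (-1)) = -1 by norm_num,
      show Finset.Icc (-1 : ℤ) (-1) = {-1} from by decide, Finset.sum_singleton]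
    norm_num
  have hL_m1 : coeffM (Φ * h * Ψ) (-1)
      = coeffM (Φ * h) (-1) * coeffM Ψ 0 + coeffM (Φ * h) 0 * coeffM Ψ (-1) := by
    rw [hL (-1), show ((-1 : ℤ) - (-1)) = 0 by norm_num,
      show Finset.Icc (-1 : ℤ) 0 = {-1, 0} from by decide]
    rw [Finset.sum_insert (by decide), Finset.sum_singleton]
    norm_num
  have hL_0 : coeffM (Φ * h * Ψ) 0
      = coeffM (Φ * h) (-1) * coeffM Ψ 1 + coeffM (Φ * h) 0 * coeffM Ψ 0
        + coeffM (Φ * h) 1 * coeffM Ψ (-1) := by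
    rw [hL 0, show ((0 : ℤ) - (-1)) = 1 by norm_num,
      show Finset.Icc (-1 : ℤ) 1 = {-1, 0, 1} from by decide]
    rw [Finset.sum_insert (by decide), Finset.sum_insert (by decide), Finset.sum_singleton]
    norm_num
    abel
  have hL_1 : coeffM (Φ * h * Ψ) 1
      = coeffM (Φ * h) (-1) * coeffM Ψ 2 + coeffM (Φ * h) 0 * coeffM Ψ 1
        + coeffM (Φ * h) 1 * coeffM Ψ 0 + coeffM (Φ * h) 2 * coeffM Ψ (-1) := by
    rw [hL 1, show ((1 : ℤ) - (-1)) = 2 by norm_num,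
      show Finset.Icc (-1 : ℤ) 2 = {-1, 0, 1, 2} from by decide]
    rw [Finset.sum_insert (by decide), Finset.sum_insert (by decide),
      Finset.sum_insert (by decide), Finset.sum_singleton]
    norm_num
    abel
  -- vector vanishing facts
  have hΨm1α : coeffM Ψ (-1) *ᵥ α = 0 := by
    rw [hΨm1, ← Matrix.mulVec_mulVec, vMV_mulVec, hσα, zero_smul]
  have hσΦm1 : α ᵥ* (σ * coeffM Φ (-1)) = 0 := by
    rw [hΦm1, ← Matrix.mul_assoc, mul_vMV, ← Matrix.vecMul_vecMul, vecMul_vMV, hσα, zero_smul,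
      Matrix.zero_vecMul]
  -- key transpose identity
  have hKEY : (coeffM Φ 0 * coeffM h 0)ᵀ * σ = σ * (coeffM h 0 * coeffM Ψ 0) := by
    rw [Matrix.transpose_mul, hΦsp 0, hhcart 0]
    simp only [Matrix.neg_mul, Matrix.mul_neg, neg_neg, Matrix.mul_assoc]
    rw [hinvσ, hσ1', Matrix.mul_one]
  -- a second sandwich lemma instance
  have sandwich2 : ∀ (u v w x : Fin (2 * n) → ℂ) (A B : Matrix (Fin (2 * n)) (Fin (2 * n)) ℂ),
      vecMulVec u v * (A * (vecMulVec w x * B))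
        = ((v ᵥ* A) ⬝ᵥ w) • (vecMulVec u x * B) := by
    intro u v w x A B
    rw [show A * (vecMulVec w x * B) = (A * vecMulVec w x) * B from by
        simp only [Matrix.mul_assoc], mul_vMV, ← Matrix.mul_assoc, vMV_mul_vMV,
      Matrix.smul_mul, Matrix.dotProduct_mulVec]
  refine ⟨(βt ᵥ* (σ * coeffM h 0)) ⬝ᵥ βt,
    (βt ᵥ* (σ * (coeffM h 0 * coeffM Ψ 1))) ⬝ᵥ α,
    (coeffM Φ 0 * coeffM h 0) *ᵥ βt + (((βt ᵥ* (σ * coeffM h 1)) ⬝ᵥ βt) / 2) • α,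
    ?_, ?_, ?_, ?_, ?_⟩
  · -- L₋₂
    rw [hL_m2, hM_m1, hΦm1, hΨm1,
      show vecMulVec α βt * σ * coeffM h 0 * (vecMulVec βt α * σ)
        = vecMulVec α βt * ((σ * coeffM h 0) * (vecMulVec βt α * σ)) from by
        simp only [Matrix.mul_assoc],
      sandwich2]
  · -- L₋₁
    rw [hL_m1, hM_m1, hM_0, hΦm1, hΨm1, Matrix.add_mul]
    rw [show vecMulVec α βt * σ * coeffM h 0 * coeffM Ψ 0
        = vecMulVec α (βt ᵥ* (σ * (coeffM h 0 * coeffM Ψ 0))) from by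
        rw [vMV_mul, vMV_mul, vMV_mul, Matrix.vecMul_vecMul, Matrix.vecMul_vecMul]]
    rw [show vecMulVec α βt * σ * coeffM h 1 * (vecMulVec βt α * σ)
        = vecMulVec α βt * ((σ * coeffM h 1) * (vecMulVec βt α * σ)) from by
        simp only [Matrix.mul_assoc],
      sandwich2]
    rw [show coeffM Φ 0 * coeffM h 0 * (vecMulVec βt α * σ)
        = vecMulVec ((coeffM Φ 0 * coeffM h 0) *ᵥ βt) α * σ from by
        rw [show coeffM Φ 0 * coeffM h 0 * (vecMulVec βt α * σ)
            = coeffM Φ 0 * coeffM h 0 * vecMulVec βt α * σ from by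
            simp only [Matrix.mul_assoc], mul_vMV]]
    rw [Matrix.add_mul, vMV_add_right, vMV_smul_right, vMV_add_left, vMV_smul_left,
      Matrix.add_mul, Matrix.add_mul]
    simp only [Matrix.smul_mul]
    rw [show vecMulVec α ((coeffM Φ 0 * coeffM h 0) *ᵥ βt) * σ
        = vecMulVec α (βt ᵥ* (σ * (coeffM h 0 * coeffM Ψ 0))) from by
        rw [vMV_mul, Matrix.vecMul_mulVec, hKEY]]
    module
  · -- β ⬝ᵥ σα = 0
    rw [add_dotProduct, smul_dotProduct, hσα, smul_zero, add_zero, dotProduct_comm,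
      Matrix.dotProduct_mulVec, Matrix.vecMul_mulVec, hσskew, Matrix.neg_mul,
      Matrix.vecMul_neg,
      show σ * (coeffM Φ 0 * coeffM h 0) = σ * coeffM Φ 0 * coeffM h 0 from by
        simp only [Matrix.mul_assoc],
      ← Matrix.vecMul_vecMul, hΦ₀α, Matrix.zero_vecMul, neg_zero, zero_dotProduct]
  · -- L₀ α = κ α
    rw [hL_0, hM_m1, Matrix.add_mulVec, Matrix.add_mulVec]
    rw [← Matrix.mulVec_mulVec (M := coeffM (Φ * h) 0) (N := coeffM Ψ 0), hΨ₀α,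
      Matrix.mulVec_zero]
    rw [← Matrix.mulVec_mulVec (M := coeffM (Φ * h) 1) (N := coeffM Ψ (-1)), hΨm1α,
      Matrix.mulVec_zero]
    rw [hΦm1,
      show vecMulVec α βt * σ * coeffM h 0 * coeffM Ψ 1
        = vecMulVec α (βt ᵥ* (σ * (coeffM h 0 * coeffM Ψ 1))) from by
        rw [vMV_mul, vMV_mul, vMV_mul, Matrix.vecMul_vecMul, Matrix.vecMul_vecMul],
      vMV_mulVec]
    simp
  · -- αᵀ σ L₁ α = 0
    rw [hL_1, hM_m1, hM_0,
      Matrix.mul_add, Matrix.mul_add, Matrix.mul_add,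
      Matrix.add_mulVec, Matrix.add_mulVec, Matrix.add_mulVec,
      dotProduct_add, dotProduct_add, dotProduct_add]
    have z3 : α ⬝ᵥ (σ * (coeffM (Φ * h) 1 * coeffM Ψ 0)) *ᵥ α = 0 := by
      rw [← Matrix.mulVec_mulVec, ← Matrix.mulVec_mulVec, hΨ₀α, Matrix.mulVec_zero,
        Matrix.mulVec_zero, dotProduct_zero]
    have z4 : α ⬝ᵥ (σ * (coeffM (Φ * h) 2 * coeffM Ψ (-1))) *ᵥ α = 0 := by
      rw [← Matrix.mulVec_mulVec, ← Matrix.mulVec_mulVec, hΨm1α, Matrix.mulVec_zero,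
        Matrix.mulVec_zero, dotProduct_zero]
    have z1 : α ⬝ᵥ (σ * (coeffM Φ (-1) * coeffM h 0 * coeffM Ψ 2)) *ᵥ α = 0 := by
      rw [Matrix.dotProduct_mulVec,
        show σ * (coeffM Φ (-1) * coeffM h 0 * coeffM Ψ 2)
          = σ * coeffM Φ (-1) * (coeffM h 0 * coeffM Ψ 2) from by
          simp only [Matrix.mul_assoc],
        ← Matrix.vecMul_vecMul, hσΦm1, Matrix.zero_vecMul, zero_dotProduct]
    have z2 : α ⬝ᵥ (σ * ((coeffM Φ (-1) * coeffM h 1 + coeffM Φ 0 * coeffM h 0) * coeffM Ψ 1))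
        *ᵥ α = 0 := by
      rw [Matrix.add_mul, Matrix.mul_add, Matrix.add_mulVec, dotProduct_add]
      rw [Matrix.dotProduct_mulVec,
        show σ * (coeffM Φ (-1) * coeffM h 1 * coeffM Ψ 1)
          = σ * coeffM Φ (-1) * (coeffM h 1 * coeffM Ψ 1) from by
          simp only [Matrix.mul_assoc],
        ← Matrix.vecMul_vecMul, hσΦm1, Matrix.zero_vecMul, zero_dotProduct]
      rw [Matrix.dotProduct_mulVec,
        show σ * (coeffM Φ 0 * coeffM h 0 * coeffM Ψ 1)
          = σ * coeffM Φ 0 * (coeffM h 0 * coeffM Ψ 1) from by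
          simp only [Matrix.mul_assoc],
        ← Matrix.vecMul_vecMul, hΦ₀α, Matrix.zero_vecMul, zero_dotProduct, add_zero]
    rw [z1, z2, z3, z4]
    norm_num
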